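/- Let q be a monic complex polynomial of degree n ≥ 2, let α ∈ ℂ be a zero of q, and let R > 0 be such that every critical point w of q (i.e., every root of q') satisfies |w − α| = R. Then for every integer 0 ≤ k ≤ n−1 one has (n−k−1)!·n·R^{2k}·q^{(k+1)}(α) = k!·q'(α)·conj(q^{(n−k)}(α)). -/

import Mathlib

open Polynomial

private lemma key_coeff (R : ℝ) :
    ∀ (s : Multiset ℂ), (∀ β ∈ s, ‖β‖ = R) →
    ∀ k l : ℕ, k + l = Multiset.card s →
      (R : ℂ) ^ (2 * k) * ((s.map fun β => X - C β).prod).coeff k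
        = ((s.map fun β => X - C β).prod).coeff 0 *
          (starRingEnd ℂ) (((s.map fun β => X - C β).prod).coeff l) := by
  intro s
  induction s using Multiset.induction_on with
  | empty =>
    intro _ k l hkl
    simp at hkl
    obtain ⟨rfl, rfl⟩ := hkl
    simp
  | cons β t IH =>
    intro hmem k l hkl
    have hβ : ‖β‖ = R := hmem β (Multiset.mem_cons_self β t)
    have hββ : β * (starRingEnd ℂ) β = (R : ℂ) ^ 2 := by
      rw [Complex.mul_conj]
      push_cast [← Complex.sq_norm, hβ]
      ring
    have ht : ∀ β' ∈ t, ‖β'‖ = R := fun β' hβ' =>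
      hmem β' (Multiset.mem_cons_of_mem hβ')
    have IH' := IH ht
    set g' : Polynomial ℂ := (t.map fun β => X - C β).prod with hg'
    have hmon : g'.Monic :=
      monic_multiset_prod_of_monic _ _ fun a _ => monic_X_sub_C a
    have hdeg : g'.natDegree = Multiset.card t :=
      natDegree_multiset_prod_X_sub_C_eq_card t
    have hprod : ((β ::ₘ t).map fun β => X - C β).prod = (X - C β) * g' := by
      rw [Multiset.map_cons, Multiset.prod_cons]
    have hcard : Multiset.card (β ::ₘ t) = Multiset.card t + 1 := by simp
    have hcoeff : ∀ i : ℕ, ((X - C β) * g').coeff (i + 1)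
        = g'.coeff i - β * g'.coeff (i + 1) := by
      intro i
      rw [sub_mul, coeff_sub, coeff_X_mul, coeff_C_mul]
    have hcoeff0 : ((X - C β) * g').coeff 0 = -β * g'.coeff 0 := by
      rw [mul_coeff_zero]
      simp
    rw [hprod]
    rw [hcard] at hkl
    rcases Nat.eq_zero_or_eq_succ_pred k with rfl | hk
    · -- k = 0, l = card t + 1
      have hl : l = Multiset.card t + 1 := by omega
      subst hl
      have hmon' : ((X - C β) * g').Monic := (monic_X_sub_C β).mul hmon
      have hdeg' : ((X - C β) * g').natDegree = Multiset.card t + 1 := by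
        rw [natDegree_mul (monic_X_sub_C β).ne_zero hmon.ne_zero, natDegree_X_sub_C, hdeg]
        omega
      have : ((X - C β) * g').coeff (Multiset.card t + 1) = 1 := by
        rw [← hdeg']; exact hmon'.coeff_natDegree
      rw [this]
      simp
    · obtain ⟨j, rfl⟩ : ∃ j, k = j + 1 := ⟨k - 1, by omega⟩
      rcases Nat.eq_zero_or_eq_succ_pred l with rfl | hl
      · -- l = 0, j = card t
        have hj : j = Multiset.card t := by omega
        subst hj
        have h0 : g'.coeff (Multiset.card t + 1) = 0 :=
          coeff_eq_zero_of_natDegree_lt (by omega)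
        have IH0 := IH' (Multiset.card t) 0 (by omega)
        rw [hcoeff, hcoeff0, h0]
        rw [map_mul, map_neg]
        linear_combination (-(R : ℂ) ^ (2 * Multiset.card t) * g'.coeff (Multiset.card t)) * hββ
          + (β * (starRingEnd ℂ) β) * IH0
      · obtain ⟨i, rfl⟩ : ∃ i, l = i + 1 := ⟨l - 1, by omega⟩
        have IH1 := IH' (j + 1) i (by omega)
        have IH2 := IH' j (i + 1) (by omega)
        rw [hcoeff, hcoeff, hcoeff0]
        rw [map_sub, map_mul]
        linear_combination (-β) * IH1 + (β * (starRingEnd ℂ)  β) * IH2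
          - ((R : ℂ) ^ (2 * j) * g'.coeff j) * hββ

/-- If `q` is monic of degree `n ≥ 2`, `q(α) = 0`, and all critical points of `q` lie on the
circle `|w - α| = R`, then `(n-k-1)! · n · R^{2k} · q^{(k+1)}(α) = k! · q'(α) · conj(q^{(n-k)}(α))`
for `0 ≤ k ≤ n-1`. -/
theorem derivative_conjugation_identity (n : ℕ) (hn : 2 ≤ n)
    (q : Polynomial ℂ) (hq : q.Monic) (hdeg : q.natDegree = n)
    (α : ℂ) (hα : q.eval α = 0) (R : ℝ) (hR : 0 < R)
    (hcrit : ∀ w : ℂ, (Polynomial.derivative q).eval w = 0 → ‖w - α‖ = R) :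
    ∀ k : ℕ, k ≤ n - 1 →
      ((Nat.factorial (n - k - 1) : ℂ)) * (n : ℂ) * (R : ℂ) ^ (2 * k) *
          ((Polynomial.derivative^[k + 1] q).eval α)
        = ((Nat.factorial k : ℂ)) * ((Polynomial.derivative q).eval α) *
          (starRingEnd ℂ) ((Polynomial.derivative^[n - k] q).eval α) := by
  intro k hk
  set q' : Polynomial ℂ := Polynomial.derivative q with hq'
  have hcoeffq' : q'.coeff (n - 1) = n := by
    rw [hq', coeff_derivative]
    have h1 : n - 1 + 1 = n := by omega
    rw [h1, show q.coeff n = 1 from hdeg ▸ hq.coeff_natDegree, one_mul]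
    norm_cast
  have hnne : (n : ℂ) ≠ 0 := Nat.cast_ne_zero.mpr (by omega)
  have hdq' : q'.natDegree = n - 1 := by
    refine le_antisymm (by rw [hq']; exact (natDegree_derivative_le q).trans (by omega)) ?_
    exact le_natDegree_of_ne_zero (by rw [hcoeffq']; exact hnne)
  have hq'ne : q' ≠ 0 := fun h => hnne (by rw [h] at hcoeffq'; simpa using hcoeffq'.symm)
  have hleadq' : q'.leadingCoeff = n := by
    rw [leadingCoeff, hdq', hcoeffq']
  -- the shifted derivative
  set T : Polynomial ℂ := taylor α q' with hT
  have hTdeg : T.natDegree = n - 1 := by rw [hT, natDegree_taylor, hdq']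
  have hTlead : T.leadingCoeff = n := by
    rw [hT, taylor_apply, leadingCoeff_comp (by simp), hleadq']
    simp
  have hTne : T ≠ 0 := fun h => hnne (by rw [h, leadingCoeff_zero] at hTlead; exact hTlead.symm)
  have hcard : Multiset.card T.roots = T.natDegree := by
    have := (IsAlgClosed.splits T).natDegree_eq_card_roots
    exact this.symm
  have hfact : C ((n : ℕ) : ℂ) * (T.roots.map fun a => X - C a).prod = T := by
    rw [← hTlead]
    exact C_leadingCoeff_mul_prod_multiset_X_sub_C hcard
  have hroots : ∀ β ∈ T.roots, ‖β‖ = R := by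
    intro β hβ
    have h0 : T.eval β = 0 := (mem_roots hTne).mp hβ
    rw [hT, taylor_eval] at h0
    have := hcrit (β + α) h0
    simpa using this
  set g : Polynomial ℂ := (T.roots.map fun a => X - C a).prod with hg
  have hTcoeff : ∀ i : ℕ, T.coeff i = (n : ℂ) * g.coeff i := by
    intro i
    rw [← hfact, coeff_C_mul]
  -- coefficients of T vs iterated derivatives of q'
  have hderiv : ∀ j : ℕ, (Polynomial.derivative^[j] q').eval α
      = (Nat.factorial j : ℂ) * T.coeff j := by
    intro j
    rw [hT, taylor_coeff, ← factorial_smul_hasseDeriv (R := ℂ) j]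
    simp [Polynomial.eval_smul, mul_comm]
  have hk1 : (Polynomial.derivative^[k + 1] q).eval α
      = (Nat.factorial k : ℂ) * T.coeff k := by
    rw [Function.iterate_succ_apply, ← hq', hderiv]
  have hnk : n - k = (n - k - 1) + 1 := by omega
  have hk2 : (Polynomial.derivative^[n - k] q).eval α
      = (Nat.factorial (n - k - 1) : ℂ) * T.coeff (n - k - 1) := by
    conv_lhs => rw [hnk]
    rw [Function.iterate_succ_apply, ← hq', hderiv]
  have hq'eval : q'.eval α = T.coeff 0 := by
    rw [hT, taylor_coeff_zero]
  have key := key_coeff R T.roots hroots k (n - k - 1)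
    (by rw [hcard, hTdeg]; omega)
  rw [← hg] at key
  rw [hk1, hk2, hq'eval, hTcoeff, hTcoeff, hTcoeff]
  simp only [map_mul, map_natCast]
  linear_combination ((Nat.factorial (n - k - 1) : ℂ) * (Nat.factorial k : ℂ) * (n:ℂ)^2) * key
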